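/- arXiv:2004.14891 — 3 statements merged into one kernel-verified Lean document; each statement's English description precedes it below -/
import Mathlib

section
/- If C^ℓ is an ℓ-level (ε/(2ℓ))-coreset of C, where 0 ≤ ε ≤ 1 and ℓ is a positive integer, then C^ℓ is an ε-coreset of C. -/
/-- `C` is an `ε`-coreset of `X` with respect to cost function `c`. -/
def Coreset {U Q : Type*} (c : Q → (U → ℝ) → ℝ) (ε : ℝ) (C X : U → ℝ) : Prop :=
  ∀ S : Q, (1 - ε) * c S C ≤ c S X ∧ c S X ≤ (1 + ε) * c S C

/-- `LevelCoreset c ε ℓ C' C` means `C'` is an `ℓ`-level `ε`-coreset of `C`. -/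
def LevelCoreset {U Q : Type*} (c : Q → (U → ℝ) → ℝ) (ε : ℝ) :
    ℕ → (U → ℝ) → (U → ℝ) → Prop
  | 0 => fun C' C => C' = C
  | (n + 1) => fun C' C => ∃ D, LevelCoreset c ε n D C ∧ Coreset c ε C' D

lemma level_bound {U Q : Type*} (c : Q → (U → ℝ) → ℝ) (δ : ℝ) (hδ0 : 0 ≤ δ)
    (hδ1 : δ ≤ 1) : ∀ n : ℕ, ∀ C Cl : U → ℝ, LevelCoreset c δ n Cl C →
    ∀ S : Q, (1 - δ) ^ n * c S Cl ≤ c S C ∧ c S C ≤ (1 + δ) ^ n * c S Cl := by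
  intro n
  induction n with
  | zero =>
    intro C Cl h S
    simp [LevelCoreset] at h
    subst h
    simp
  | succ n ih =>
    intro C Cl h S
    obtain ⟨D, hD, hCor⟩ := h
    obtain ⟨h1, h2⟩ := ih C D hD S
    obtain ⟨h3, h4⟩ := hCor S
    have hp1 : (0:ℝ) ≤ (1 - δ) ^ n := pow_nonneg (by linarith) n
    have hp2 : (0:ℝ) ≤ (1 + δ) ^ n := pow_nonneg (by linarith) n
    constructor
    · calc (1 - δ) ^ (n + 1) * c S Cl = (1 - δ) ^ n * ((1 - δ) * c S Cl) := by ring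
      _ ≤ (1 - δ) ^ n * c S D := by exact mul_le_mul_of_nonneg_left h3 hp1
      _ ≤ c S C := h1
    · calc c S C ≤ (1 + δ) ^ n * c S D := h2
      _ ≤ (1 + δ) ^ n * ((1 + δ) * c S Cl) := mul_le_mul_of_nonneg_left h4 hp2
      _ = (1 + δ) ^ (n + 1) * c S Cl := by ring

lemma pow_upper (δ : ℝ) (hδ0 : 0 ≤ δ) : ∀ n : ℕ, n * δ ≤ 1/2 →
    (1 + δ) ^ n ≤ 1 + 2 * n * δ := by
  intro n
  induction n with
  | zero => simp
  | succ n ih =>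
    intro hn
    have hn' : (n:ℝ) * δ ≤ 1/2 := by
      have : (n:ℝ) ≤ (n:ℝ) + 1 := by linarith
      push_cast at hn ⊢
      nlinarith
    have h1 := ih hn'
    have hp : (0:ℝ) ≤ 1 + δ := by linarith
    push_cast at hn ⊢
    calc (1 + δ) ^ (n + 1) = (1 + δ) ^ n * (1 + δ) := by ring
      _ ≤ (1 + 2 * n * δ) * (1 + δ) := by nlinarith [pow_nonneg hp n]
      _ ≤ 1 + 2 * (n + 1) * δ := by nlinarith

theorem level_coreset_eps {U Q : Type*} (c : Q → (U → ℝ) → ℝ)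
    (ε : ℝ) (hε0 : 0 ≤ ε) (hε1 : ε ≤ 1) (ℓ : ℕ) (hℓ : 1 ≤ ℓ) (C Cl : U → ℝ)
    (h : LevelCoreset c (ε / (2 * ℓ)) ℓ Cl C) :
    Coreset c ε Cl C := by
  set δ : ℝ := ε / (2 * ℓ) with hδ
  have hℓ1 : (1:ℝ) ≤ (ℓ:ℝ) := by exact_mod_cast hℓ
  have hℓpos : (0:ℝ) < 2 * ℓ := by linarith
  have hδ0 : 0 ≤ δ := div_nonneg hε0 (by linarith)
  have hℓδ : (ℓ:ℝ) * δ = ε / 2 := by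
    field_simp [hδ]
    rw [hδ]
    field_simp
  have hδ1 : δ ≤ 1 := by
    have : δ ≤ ε / 2 := by nlinarith
    linarith
  obtain ⟨m, rfl⟩ : ∃ n, ℓ = n + 1 := ⟨ℓ - 1, (Nat.succ_pred_eq_of_pos hℓ).symm⟩
  obtain ⟨D, hD, hCor⟩ := h
  have h' : LevelCoreset c δ (m + 1) Cl C := ⟨D, hD, hCor⟩
  intro S
  obtain ⟨h1, h2⟩ := level_bound c δ hδ0 hδ1 (m + 1) C Cl h' S
  have hup : (1 + δ) ^ (m + 1) ≤ 1 + ε := by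
    have := pow_upper δ hδ0 (m + 1) (by push_cast at hℓδ ⊢; nlinarith)
    calc (1 + δ) ^ (m + 1) ≤ 1 + 2 * ((m:ℝ) + 1) * δ := by push_cast at this; linarith
      _ = 1 + ε := by push_cast at hℓδ; nlinarith
  have hlow : 1 - ε ≤ (1 - δ) ^ (m + 1) := by
    have hb : (-2:ℝ) ≤ -δ := by linarith
    have h' := one_add_mul_le_pow hb (m + 1)
    have : 1 - ε / 2 ≤ (1 - δ) ^ (m + 1) := by
      have e1 : 1 - ε / 2 ≤ 1 + ((m:ℝ) + 1) * (-δ) := by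
        push_cast at hℓδ; nlinarith
      calc 1 - ε / 2 ≤ 1 + ((m:ℝ) + 1) * (-δ) := e1
        _ ≤ (1 + -δ) ^ (m + 1) := by exact_mod_cast h'
        _ = (1 - δ) ^ (m + 1) := by ring_nf
    linarith
  rcases eq_or_lt_of_le hε0 with heq | hpos
  · -- ε = 0 hence δ = 0 and everything is equal
    have hδz : δ = 0 := by rw [hδ, ← heq]; simp
    rw [hδz] at h1 h2
    simp at h1 h2
    rw [← heq]
    constructor <;> simp <;> linarith
  · have hδpos : 0 < δ := div_pos hpos hℓpos
    obtain ⟨h3, h4⟩ := hCor S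
    have hc : 0 ≤ c S Cl := by nlinarith
    constructor
    · calc (1 - ε) * c S Cl ≤ (1 - δ) ^ (m + 1) * c S Cl :=
          mul_le_mul_of_nonneg_right hlow hc
        _ ≤ c S C := h1
    · calc c S C ≤ (1 + δ) ^ (m + 1) * c S Cl := h2
        _ ≤ (1 + ε) * c S Cl := mul_le_mul_of_nonneg_right hup hc
end

section
/- Let n be a positive integer, c a positive integer, ε a real with 0 < ε ≤ 1, and set d = n^{c+1}·⌈1/ε⌉. Given positive integers a, b with a ≤ n^c and b ≤ n^c, let f = ⌈a·d/b⌉. Then f ≤ n^{2c+1}·⌈1/ε⌉, and for any nonnegative real D, (1 − ε/n)·(a/b)·D ≤ (f/d)·D ≤ (1 + ε/n)·(a/b)·D. -/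
theorem weight_rounding (n c : ℕ) (hn : 0 < n) (hc : 0 < c)
    (ε : ℝ) (hε0 : 0 < ε) (hε1 : ε ≤ 1)
    (d : ℕ) (hd : d = n ^ (c + 1) * ⌈1 / ε⌉₊)
    (a b : ℕ) (ha : 0 < a) (hb : 0 < b) (han : a ≤ n ^ c) (hbn : b ≤ n ^ c)
    (f : ℤ) (hf : f = ⌈((a : ℚ) * d) / b⌉) :
    f ≤ (n : ℤ) ^ (2 * c + 1) * ⌈1 / ε⌉₊ ∧
      ∀ D : ℝ, 0 ≤ D →
        (1 - ε / n) * ((a : ℝ) / b) * D ≤ ((f : ℝ) / d) * D ∧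
          ((f : ℝ) / d) * D ≤ (1 + ε / n) * ((a : ℝ) / b) * D := by
  have hceil1 : 1 ≤ ⌈1 / ε⌉₊ := Nat.one_le_iff_ne_zero.mpr
    (by positivity : (0:ℕ) < ⌈1 / ε⌉₊).ne'
  have hdpos : 0 < d := by
    rw [hd]; exact Nat.mul_pos (pow_pos hn _) (lt_of_lt_of_le one_pos hceil1)
  have hnR : (0:ℝ) < n := by exact_mod_cast hn
  have hbR : (0:ℝ) < b := by exact_mod_cast hb
  have haR : (1:ℝ) ≤ a := by exact_mod_cast ha
  have hdR : (0:ℝ) < d := by exact_mod_cast hdpos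
  have hεceil : 1 / ε ≤ (⌈1 / ε⌉₊ : ℝ) := Nat.le_ceil _
  have hdRe : (d:ℝ) = (n:ℝ) ^ (c+1) * (⌈1 / ε⌉₊ : ℝ) := by rw [hd]; push_cast; ring
  -- part 1
  have part1 : f ≤ (n : ℤ) ^ (2 * c + 1) * ⌈1 / ε⌉₊ := by
    have h1 : f ≤ ((a * d : ℕ) : ℤ) := by
      rw [hf]
      apply Int.ceil_le.mpr
      push_cast
      exact div_le_self (by positivity) (by exact_mod_cast hb)
    refine h1.trans ?_
    have h2 : a * d ≤ n ^ (2 * c + 1) * ⌈1 / ε⌉₊ := by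
      calc a * d ≤ n ^ c * d := Nat.mul_le_mul_right _ han
        _ = n ^ (2 * c + 1) * ⌈1 / ε⌉₊ := by
            rw [hd, ← mul_assoc, ← pow_add]; ring_nf
    exact_mod_cast h2
  refine ⟨part1, ?_⟩
  -- real bounds on f
  have hfl : (a:ℝ) * d / b ≤ (f:ℝ) := by
    have h : ((a : ℚ) * d) / b ≤ (f : ℚ) := hf ▸ Int.le_ceil _
    have h' : (((a : ℚ) * d / b : ℚ) : ℝ) ≤ ((f : ℚ) : ℝ) := by exact_mod_cast h
    push_cast at h'; exact h'
  have hfu : (f:ℝ) ≤ (a:ℝ) * d / b + 1 := by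
    have h : (f : ℚ) ≤ ((a : ℚ) * d) / b + 1 := (hf ▸ Int.ceil_lt_add_one _).le
    have h' : ((f : ℚ) : ℝ) ≤ (((a : ℚ) * d / b + 1 : ℚ) : ℝ) := by exact_mod_cast h
    push_cast at h'; exact h'
  -- ε d ≥ n^{c+1}
  have hεd : (n:ℝ) ^ (c+1) ≤ ε * d := by
    rw [hdRe]
    have hp : (0:ℝ) < (n:ℝ) ^ (c+1) := by positivity
    have := mul_le_mul_of_nonneg_left hεceil (by positivity : (0:ℝ) ≤ ε * (n:ℝ)^(c+1))
    calc (n:ℝ)^(c+1) = ε * (n:ℝ)^(c+1) * (1/ε) := by field_simp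
      _ ≤ ε * (n:ℝ)^(c+1) * (⌈1/ε⌉₊ : ℝ) := this
      _ = ε * ((n:ℝ)^(c+1) * (⌈1/ε⌉₊ : ℝ)) := by ring
  have hL : (1 - ε / n) * ((a : ℝ) / b) ≤ (f:ℝ) / d := by
    have h1 : (a:ℝ) / b ≤ (f:ℝ) / d := by
      rw [div_le_div_iff₀ hbR hdR]
      have := (div_le_iff₀ hbR).mp hfl
      linarith
    refine le_trans ?_ h1
    have h2 : 0 ≤ ε / n := by positivity
    have h3 : (0:ℝ) ≤ (a:ℝ) / b := by positivity
    nlinarith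
  have hU : (f:ℝ) / d ≤ (1 + ε / n) * ((a : ℝ) / b) := by
    have h1 : (f:ℝ) / d ≤ (a:ℝ) / b + 1 / d := by
      have h2 : (f:ℝ) / d ≤ ((a:ℝ) * d / b + 1) / d := by
        exact div_le_div_of_nonneg_right hfu hdR.le
      rwa [show ((a:ℝ) * d / b + 1) / d = (a:ℝ) / b + 1 / d by field_simp] at h2
    refine h1.trans ?_
    have key : 1 / (d:ℝ) ≤ (ε / n) * ((a:ℝ) / b) := by
      rw [div_le_iff₀ hdR, div_mul_div_comm, div_mul_eq_mul_div, one_le_div (by positivity)]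
      have hb' : (b:ℝ) ≤ (n:ℝ) ^ c := by exact_mod_cast hbn
      have h4 : (n:ℝ) * b ≤ (n:ℝ) ^ (c+1) := by
        rw [pow_succ]
        nlinarith
      nlinarith [mul_le_mul_of_nonneg_right haR (show (0:ℝ) ≤ ε * d by positivity)]
    have h5 : (0:ℝ) ≤ (a:ℝ) / b := by positivity
    nlinarith
  intro D hD
  exact ⟨mul_le_mul_of_nonneg_right hL hD, mul_le_mul_of_nonneg_right hU hD⟩
end

section
/- In the metric space construction from a Boolean N×N matrix M (points 1..4N; d(i,j)=2 for 1≤i<j≤N and for N+1≤i<j≤2N; d(i,j)=1 if 1≤i≤N<j≤2N and M_{i,j−N}=1, else 2; points above 2N at distance 100 from everything), for Boolean vectors u, v: if uᵀMv = 1 (i.e., there exist i, j with u_i = 1, v_j = 1, M_{i,j} = 1), then the point set X consisting of {i : u_i = 1} ∪ {j + N : v_j = 1} ∪ (enough far points so |X| = 2N+1) admits a set of k = 2N centers from X with k-means cost exactly 1; if uᵀMv = 0, every set of k = 2N centers chosen from X has k-means cost at least 4. -/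
/-- Points of the OMv lower-bound construction: `N` "row" points, `N` "column"
points, and `2N+1` far points. -/
abbrev Pt (N : ℕ) := Fin N ⊕ (Fin N ⊕ Fin (2 * N + 1))

/-- The distance function constructed from the Boolean matrix `M`. -/
def dM {N : ℕ} (M : Fin N → Fin N → Bool) (x y : Pt N) : ℝ :=
  if x = y then 0 else
    match x, y with
    | Sum.inl i, Sum.inr (Sum.inl j) => if M i j then 1 else 2
    | Sum.inr (Sum.inl j), Sum.inl i => if M i j then 1 else 2
    | Sum.inl _, Sum.inl _ => 2
    | Sum.inr (Sum.inl _), Sum.inr (Sum.inl _) => 2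
    | _, _ => 100

/-- The `k`-means cost of the center set `S` on the point set `X`. -/
noncomputable def kMeansCost {N : ℕ} (M : Fin N → Fin N → Bool)
    (S X : Finset (Pt N)) : ℝ :=
  ∑ x ∈ X, (⨅ s : S, dM M x (s : Pt N)) ^ 2

lemma dM_nonneg {N : ℕ} (M : Fin N → Fin N → Bool) (x y : Pt N) : 0 ≤ dM M x y := by
  unfold dM
  rcases x with i | j | m <;> rcases y with i' | j' | m' <;> simp <;> split_ifs <;> norm_num

lemma dM_self {N : ℕ} (M : Fin N → Fin N → Bool) (x : Pt N) : dM M x x = 0 := by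
  simp [dM]

lemma one_le_dM {N : ℕ} (M : Fin N → Fin N → Bool) {x y : Pt N} (h : x ≠ y) :
    1 ≤ dM M x y := by
  unfold dM
  rcases x with i | j | m <;> rcases y with i' | j' | m' <;> simp_all <;> split_ifs <;> norm_num

lemma dM_bdd {N : ℕ} (M : Fin N → Fin N → Bool) (x : Pt N) (S : Finset (Pt N)) :
    BddBelow (Set.range fun s : S => dM M x (s : Pt N)) :=
  ⟨0, by rintro _ ⟨s, rfl⟩; exact dM_nonneg M x s⟩

lemma iInf_dM_mem {N : ℕ} (M : Fin N → Fin N → Bool) {x : Pt N} {S : Finset (Pt N)}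
    (hx : x ∈ S) : (⨅ s : S, dM M x (s : Pt N)) = 0 := by
  refine le_antisymm ?_ (Real.iInf_nonneg fun s => dM_nonneg M x s)
  exact (ciInf_le (dM_bdd M x S) ⟨x, hx⟩).trans (le_of_eq (dM_self M x))

lemma two_le_dM {N : ℕ} (M : Fin N → Fin N → Bool) {x y : Pt N} (h : x ≠ y)
    (h2 : ∀ i j, x = Sum.inl i → y = Sum.inr (Sum.inl j) → M i j = false)
    (h3 : ∀ i j, y = Sum.inl i → x = Sum.inr (Sum.inl j) → M i j = false) :
    2 ≤ dM M x y := by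
  unfold dM
  rcases x with i | j | m <;> rcases y with i' | j' | m' <;> simp_all <;> norm_num

theorem omv_kmeans_gap (N : ℕ) (hN : 1 ≤ N)
    (M : Fin N → Fin N → Bool) (u v : Fin N → Bool)
    (L R F X : Finset (Pt N))
    (hL : L = (Finset.univ.filter fun i => u i).image Sum.inl)
    (hR : R = (Finset.univ.filter fun j => v j).image fun j => Sum.inr (Sum.inl j))
    (hF : F = (Finset.univ.filter
        fun m : Fin (2 * N + 1) => (m : ℕ) < 2 * N + 1 - (L.card + R.card)).image
        fun m => Sum.inr (Sum.inr m))
    (hX : X = L ∪ R ∪ F) :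
    ((∃ i j, u i = true ∧ v j = true ∧ M i j = true) →
        ∃ S ⊆ X, S.card = 2 * N ∧ kMeansCost M S X = 1) ∧
      ((¬ ∃ i j, u i = true ∧ v j = true ∧ M i j = true) →
        ∀ S ⊆ X, S.card = 2 * N → 4 ≤ kMeansCost M S X) := by
  -- membership characterizations
  have hmemL : ∀ i : Fin N, (Sum.inl i : Pt N) ∈ X ↔ u i = true := by
    intro i; subst hX hF hR hL; simp
  have hmemR : ∀ j : Fin N, (Sum.inr (Sum.inl j) : Pt N) ∈ X ↔ v j = true := by
    intro j; subst hX hF hR hL; simp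
  -- cardinalities
  have hLc : L.card = (Finset.univ.filter fun i => u i).card := by
    rw [hL, Finset.card_image_of_injective _ Sum.inl_injective]
  have hRc : R.card = (Finset.univ.filter fun j => v j).card := by
    rw [hR, Finset.card_image_of_injective]
    intro a b h; simpa using h
  have hLN : L.card ≤ N := by
    rw [hLc]; exact (Finset.card_filter_le _ _).trans (by simp)
  have hRN : R.card ≤ N := by
    rw [hRc]; exact (Finset.card_filter_le _ _).trans (by simp)
  have hKle : 2 * N + 1 - (L.card + R.card) ≤ 2 * N + 1 := Nat.sub_le _ _
  have hFc : F.card = 2 * N + 1 - (L.card + R.card) := by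
    rw [hF, Finset.card_image_of_injective]
    · set K := 2 * N + 1 - (L.card + R.card) with hK
      rcases lt_or_eq_of_le hKle with hlt | heq
      · have : (Finset.univ.filter fun m : Fin (2 * N + 1) => (m : ℕ) < K) =
            Finset.Iio (⟨K, hlt⟩ : Fin (2 * N + 1)) := by
          ext m; simp [Fin.lt_def]
        rw [this, Fin.card_Iio]
      · have : (Finset.univ.filter fun m : Fin (2 * N + 1) => (m : ℕ) < K) =
            Finset.univ := by
          ext m; have := m.isLt; simp; omega
        rw [this, Finset.card_univ, Fintype.card_fin, heq]
    · intro a b h; simpa using h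
  have hdLR : Disjoint L R := by
    rw [hL, hR, Finset.disjoint_left]
    rintro a ha hb
    simp only [Finset.mem_image] at ha hb
    obtain ⟨i, -, rfl⟩ := ha; obtain ⟨j, -, h⟩ := hb; simp at h
  have hdLRF : Disjoint (L ∪ R) F := by
    rw [hL, hR, hF, Finset.disjoint_left]
    rintro a ha hb
    simp only [Finset.mem_union, Finset.mem_image] at ha hb
    obtain ⟨m, -, rfl⟩ := hb
    rcases ha with ⟨i, -, h⟩ | ⟨j, -, h⟩ <;> simp at h
  have hXcard : X.card = 2 * N + 1 := by
    rw [hX, Finset.card_union_of_disjoint hdLRF, Finset.card_union_of_disjoint hdLR, hFc]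
    omega
  constructor
  · rintro ⟨i, j, hu, hv, hM⟩
    set a : Pt N := Sum.inl i with ha'
    set b : Pt N := Sum.inr (Sum.inl j) with hb'
    have ha : a ∈ X := (hmemL i).2 hu
    have hb : b ∈ X := (hmemR j).2 hv
    have hab : b ≠ a := by simp [ha', hb']
    have hbS : b ∈ X.erase a := Finset.mem_erase.2 ⟨hab, hb⟩
    haveI hne : Nonempty { x // x ∈ X.erase a } := ⟨⟨b, hbS⟩⟩
    refine ⟨X.erase a, Finset.erase_subset _ _, by rw [Finset.card_erase_of_mem ha, hXcard]; omega, ?_⟩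
    unfold kMeansCost
    rw [← Finset.add_sum_erase _ _ ha]
    have h1 : (⨅ s : (X.erase a : Finset (Pt N)), dM M a (s : Pt N)) = 1 := by
      refine le_antisymm ?_ (le_ciInf fun s => one_le_dM M
        (fun h => (Finset.mem_erase.1 s.2).1 h.symm))
      refine (ciInf_le (dM_bdd M a _) ⟨b, hbS⟩).trans (le_of_eq ?_)
      simp [dM, ha', hb', hM]
    have h0 : ∑ x ∈ X.erase a, (⨅ s : (X.erase a : Finset (Pt N)), dM M x (s : Pt N)) ^ 2 = 0 := by
      refine Finset.sum_eq_zero fun x hx => ?_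
      rw [iInf_dM_mem M hx]; norm_num
    rw [h1, h0]; norm_num
  · intro hno S hS hScard
    have hssub : S ⊂ X := Finset.ssubset_iff_subset_ne.2 ⟨hS, fun h => by
      rw [h] at hScard; omega⟩
    obtain ⟨x₀, hx₀X, hx₀S⟩ := Finset.exists_of_ssubset hssub
    have hSne : S.Nonempty := Finset.card_pos.1 (by omega)
    haveI : Nonempty { x // x ∈ S } := ⟨⟨hSne.choose, hSne.choose_spec⟩⟩
    have hd2' : ∀ s ∈ S, (2 : ℝ) ≤ dM M x₀ s := by
      intro s hs
      refine two_le_dM M (fun h => hx₀S (h ▸ hs)) ?_ ?_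
      · rintro i j rfl rfl
        by_contra hMij
        exact hno ⟨i, j, (hmemL i).1 hx₀X, (hmemR j).1 (hS hs), by simpa using hMij⟩
      · rintro i j rfl rfl
        by_contra hMij
        exact hno ⟨i, j, (hmemL i).1 (hS hs), (hmemR j).1 hx₀X, by simpa using hMij⟩
    have hd2 : ∀ s : { x // x ∈ S }, (2 : ℝ) ≤ dM M x₀ (s : Pt N) :=
      fun s => hd2' s s.2
    have hinf : (2 : ℝ) ≤ ⨅ s : S, dM M x₀ (s : Pt N) := le_ciInf hd2
    have hsq : (4 : ℝ) ≤ (⨅ s : S, dM M x₀ (s : Pt N)) ^ 2 := by nlinarith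
    refine hsq.trans ?_
    unfold kMeansCost
    exact Finset.single_le_sum (f := fun x => (⨅ s : S, dM M x (s : Pt N)) ^ 2)
      (fun x _ => sq_nonneg _) hx₀X
end
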